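/- Let v_0, v_1, …, v_k ∈ H be pairwise ω-orthogonal vectors, each with a_1-coordinate equal to 1. Let S = {y ∈ H₂ : m·y ∈ span_ℤ(pr₂(v_0),…,pr₂(v_k)) for some nonzero integer m} be the smallest direct summand of H₂ containing the projections pr₂(v_i), let (s_1,…,s_r) be a ℤ-basis of S, and let D ⊆ H₂ be an isotropic direct summand of rank r with a basis u_1, …, u_r satisfying ω(s_i, u_j) = δ_{ij}. Let t be the b_1-coordinate of v_0. Then there exists u ∈ D such that ω(a_1 + t·b_1 + u, v_j) = 0 for all j = 0, …, k. -/

import Mathlib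

namespace Paper

/-- The standard symplectic form on `R^{2g}` with respect to the basis
`a_1, b_1, …, a_g, b_g` (coordinates `2i, 2i+1` for `a_{i+1}, b_{i+1}`). -/
def symp {R : Type*} [CommRing R] {g : ℕ} (x y : Fin (2 * g) → R) : R :=
  ∑ i : Fin g,
    (x ⟨2 * i.1, by omega⟩ * y ⟨2 * i.1 + 1, by omega⟩ -
      x ⟨2 * i.1 + 1, by omega⟩ * y ⟨2 * i.1, by omega⟩)

theorem symp_add_left {R : Type*} [CommRing R] {g : ℕ} (x y a : Fin (2 * g) → R) :
    symp (x + y) a = symp x a + symp y a := by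
  unfold symp
  rw [← Finset.sum_add_distrib]
  exact Finset.sum_congr rfl fun i _ => by simp only [Pi.add_apply]; ring

theorem symp_smul_left {R : Type*} [CommRing R] {g : ℕ} (c : R) (x a : Fin (2 * g) → R) :
    symp (c • x) a = c * symp x a := by
  unfold symp
  rw [Finset.mul_sum]
  exact Finset.sum_congr rfl fun i _ => by simp only [Pi.smul_apply, smul_eq_mul]; ring

theorem symp_zero_left {R : Type*} [CommRing R] {g : ℕ} (a : Fin (2 * g) → R) :
    symp (0 : Fin (2 * g) → R) a = 0 := by
  unfold symp; simp

/-- The orthogonal complement `A^⊥ = {x | ω(x,a) = 0 for all a ∈ A}`. -/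
def perp {R : Type*} [CommRing R] {g : ℕ} (A : Set (Fin (2 * g) → R)) :
    Submodule R (Fin (2 * g) → R) where
  carrier := {x | ∀ a ∈ A, symp x a = 0}
  add_mem' := by
    intro x y hx hy a ha
    rw [symp_add_left, hx a ha, hy a ha, add_zero]
  zero_mem' := by
    intro a ha
    exact symp_zero_left a
  smul_mem' := by
    intro c x hx a ha
    rw [symp_smul_left, hx a ha, mul_zero]

/-- The submodule of vectors whose first `m` coordinates vanish.
`H_k = coordZero R (2*g) (2*(k-1))`, and `H₂ = coordZero R (2*(g+1)) 2`. -/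
def coordZero (R : Type*) [CommRing R] (n m : ℕ) : Submodule R (Fin n → R) where
  carrier := {v | ∀ j : Fin n, (j : ℕ) < m → v j = 0}
  add_mem' := by
    intro x y hx hy j hj
    have h1 := hx j hj
    have h2 := hy j hj
    simp [Pi.add_apply, h1, h2]
  zero_mem' := by intro j hj; rfl
  smul_mem' := by
    intro c x hx j hj
    have h1 := hx j hj
    simp [Pi.smul_apply, h1]

/-- The standard basis vector `a_{i+1}` (`i` is 0-indexed). -/
def stdA (R : Type*) [CommRing R] (g i : ℕ) : Fin (2 * g) → R :=
  fun j => if (j : ℕ) = 2 * i then 1 else 0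

/-- The standard basis vector `b_{i+1}` (`i` is 0-indexed). -/
def stdB (R : Type*) [CommRing R] (g i : ℕ) : Fin (2 * g) → R :=
  fun j => if (j : ℕ) = 2 * i + 1 then 1 else 0

/-- Regard an integer vector as a rational vector. -/
def qcast {n : ℕ} (v : Fin n → ℤ) : Fin n → ℚ := fun j => (v j : ℚ)

/-- The projection `pr₂` deleting the `a_1`- and `b_1`-coordinates. -/
def pr2 {R : Type*} [CommRing R] {n : ℕ} (v : Fin n → R) : Fin n → R :=
  fun j => if (j : ℕ) < 2 then 0 else v j

/-- `gcd(v_1, …, v_m) = 1`: the vectors are linearly independent and their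
ℤ-span is a direct summand. -/
def IsUnimodular {n m : ℕ} (v : Fin m → Fin n → ℤ) : Prop :=
  LinearIndependent ℤ v ∧
    ∃ C : Submodule ℤ (Fin n → ℤ), IsCompl (Submodule.span ℤ (Set.range v)) C

/-- A primitive vector. -/
def Primitive {n : ℕ} (v : Fin n → ℤ) : Prop := IsUnimodular ![v]

/-- The entries of `w` are pairwise `ω`-orthogonal. -/
def PairwiseOrth {g m : ℕ} (w : Fin m → Fin (2 * g) → ℤ) : Prop :=
  ∀ i j, i ≠ j → symp (w i) (w j) = 0

/-- `Λ³ W`: the span of all wedges of three vectors from `W` inside the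
exterior algebra. -/
def wedge3 {g : ℕ} (W : Submodule ℚ (Fin (2 * g) → ℚ)) :
    Submodule ℚ (ExteriorAlgebra ℚ (Fin (2 * g) → ℚ)) :=
  Submodule.span ℚ {x | ∃ z₁ ∈ W, ∃ z₂ ∈ W, ∃ z₃ ∈ W,
    x = ExteriorAlgebra.ι ℚ z₁ * ExteriorAlgebra.ι ℚ z₂ * ExteriorAlgebra.ι ℚ z₃}

/-- `u ∧ Λ² W`. -/
def uWedge2 {g : ℕ} (u : Fin (2 * g) → ℚ) (W : Submodule ℚ (Fin (2 * g) → ℚ)) :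
    Submodule ℚ (ExteriorAlgebra ℚ (Fin (2 * g) → ℚ)) :=
  Submodule.span ℚ {x | ∃ z₁ ∈ W, ∃ z₂ ∈ W,
    x = ExteriorAlgebra.ι ℚ u * ExteriorAlgebra.ι ℚ z₁ * ExteriorAlgebra.ι ℚ z₂}

/-- `u ∧ u' ∧ W`. -/
def uuWedge1 {g : ℕ} (u u' : Fin (2 * g) → ℚ) (W : Submodule ℚ (Fin (2 * g) → ℚ)) :
    Submodule ℚ (ExteriorAlgebra ℚ (Fin (2 * g) → ℚ)) :=
  Submodule.span ℚ {x | ∃ z ∈ W,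
    x = ExteriorAlgebra.ι ℚ u * ExteriorAlgebra.ι ℚ u' * ExteriorAlgebra.ι ℚ z}

/-- The simplicial differential: on the summand indexed by `w` it sends `z` to
`Σ_j (-1)^j · z` placed in the summand indexed by `∂_j w`. -/
noncomputable def diff (g p : ℕ)
    (ξ : (Fin (p + 1) → Fin (2 * g) → ℤ) →₀ ExteriorAlgebra ℚ (Fin (2 * g) → ℚ)) :
    (Fin p → Fin (2 * g) → ℤ) →₀ ExteriorAlgebra ℚ (Fin (2 * g) → ℚ) :=
  ξ.sum fun w z =>
    ∑ j : Fin (p + 1), ((-1 : ℚ) ^ (j : ℕ)) • Finsupp.single (fun i => w (j.succAbove i)) z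

/-- The gcd of the determinants of all maximal square submatrices of the matrix
whose columns are the `v i`. -/
def vgcd {ι : Type*} [Fintype ι] {m : ℕ} (v : Fin m → ι → ℤ) : ℕ :=
  Finset.univ.gcd fun r : Fin m → ι => (Matrix.det (Matrix.of fun i j => v j (r i))).natAbs


section Aux

theorem symp_comm' {R : Type*} [CommRing R] {g : ℕ} (x y : Fin (2 * g) → R) :
    symp x y = - symp y x := by
  unfold symp
  rw [← Finset.sum_neg_distrib]
  exact Finset.sum_congr rfl fun i _ => by ring

theorem symp_self' {R : Type*} [CommRing R] {g : ℕ} (x : Fin (2 * g) → R) :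
    symp x x = 0 := by
  unfold symp
  exact Finset.sum_eq_zero fun i _ => by ring

theorem symp_zero_right' {R : Type*} [CommRing R] {g : ℕ} (x : Fin (2 * g) → R) :
    symp x (0 : Fin (2 * g) → R) = 0 := by
  rw [symp_comm', symp_zero_left, neg_zero]

theorem symp_add_right' {R : Type*} [CommRing R] {g : ℕ} (x a b : Fin (2 * g) → R) :
    symp x (a + b) = symp x a + symp x b := by
  rw [symp_comm', symp_add_left, symp_comm' x a, symp_comm' x b]; ring

theorem symp_smul_right' {R : Type*} [CommRing R] {g : ℕ} (c : R) (x a : Fin (2 * g) → R) :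
    symp x (c • a) = c * symp x a := by
  rw [symp_comm', symp_smul_left, symp_comm' x a]; ring

theorem symp_sum_right' {R : Type*} [CommRing R] {g : ℕ} {ι : Type*}
    (x : Fin (2 * g) → R) (t : Finset ι) (f : ι → Fin (2 * g) → R) :
    symp x (∑ i ∈ t, f i) = ∑ i ∈ t, symp x (f i) := by
  classical
  induction t using Finset.induction with
  | empty => simp [symp_zero_right']
  | insert _ _ h ih => rw [Finset.sum_insert h, Finset.sum_insert h, symp_add_right', ih]

theorem symp_stdA_left' {R : Type*} [CommRing R] {g : ℕ} (y : Fin (2 * (g + 1)) → R) :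
    symp (stdA R (g + 1) 0) y = y ⟨1, Nat.succ_lt_succ (Nat.succ_pos _)⟩ := by
  unfold symp stdA
  rw [Finset.sum_eq_single (⟨0, by omega⟩ : Fin (g + 1))]
  · norm_num
  · intro i _ hi
    have hi' : (i : ℕ) ≠ 0 := fun h => hi (Fin.ext h)
    have h1 : ¬ (2 * (i : ℕ) = 2 * 0) := by omega
    have h2 : ¬ (2 * (i : ℕ) + 1 = 2 * 0) := by omega
    simp [h1, h2, hi']
  · intro h; exact absurd (Finset.mem_univ _) h

theorem symp_stdB_left' {R : Type*} [CommRing R] {g : ℕ} (y : Fin (2 * (g + 1)) → R) :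
    symp (stdB R (g + 1) 0) y = - y ⟨0, Nat.succ_pos _⟩ := by
  unfold symp stdB
  rw [Finset.sum_eq_single (⟨0, by omega⟩ : Fin (g + 1))]
  · norm_num
  · intro i _ hi
    have hi' : (i : ℕ) ≠ 0 := fun h => hi (Fin.ext h)
    have h1 : ¬ (2 * (i : ℕ) = 2 * 0 + 1) := by omega
    have h2 : ¬ (2 * (i : ℕ) + 1 = 2 * 0 + 1) := by omega
    simp [h1, h2, hi']
  · intro h; exact absurd (Finset.mem_univ _) h

/-- Decomposition `x = pr2 x + x₀ • a₁ + x₁ • b₁`. -/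
theorem pr2_decomp' {g : ℕ} (x : Fin (2 * (g + 1)) → ℤ) :
    x = pr2 x + x ⟨0, Nat.succ_pos _⟩ • stdA ℤ (g + 1) 0 + x ⟨1, Nat.succ_lt_succ (Nat.succ_pos _)⟩ • stdB ℤ (g + 1) 0 := by
  funext j
  simp only [pr2, stdA, stdB, Pi.add_apply, Pi.smul_apply, smul_eq_mul]
  rcases Nat.lt_or_ge (j : ℕ) 2 with h | h
  · have hcase : (j : ℕ) = 0 ∨ (j : ℕ) = 1 := by omega
    rcases hcase with h0 | h0
    · have hj : j = ⟨0, by omega⟩ := Fin.ext h0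
      rw [hj]; simp
    · have hj : j = ⟨1, by omega⟩ := Fin.ext h0
      rw [hj]; simp
  · have h0 : ¬ ((j : ℕ) < 2) := by omega
    have h1 : ¬ ((j : ℕ) = 0) := by omega
    have h2 : ¬ ((j : ℕ) = 1) := by omega
    simp [h0, h1, h2]

end Aux

/-- Lemma 2.23, second case — compensating vector `u ∈ D` for the
dual of the smallest summand containing the projections. -/
theorem stmt10 (g k r : ℕ) (v : Fin (k + 1) → Fin (2 * (g + 1)) → ℤ)
    (horth : ∀ i j, i ≠ j → symp (v i) (v j) = 0)
    (ha1 : ∀ i, v i ⟨0, by omega⟩ = 1)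
    (s : Fin r → Fin (2 * (g + 1)) → ℤ)
    (hsli : LinearIndependent ℤ s)
    (hsS : ∀ y : Fin (2 * (g + 1)) → ℤ,
      (y ∈ coordZero ℤ (2 * (g + 1)) 2 ∧
        ∃ m : ℤ, m ≠ 0 ∧ m • y ∈ Submodule.span ℤ (Set.range fun i => pr2 (v i))) ↔
      y ∈ Submodule.span ℤ (Set.range s))
    (u : Fin r → Fin (2 * (g + 1)) → ℤ)
    (huH2 : ∀ j, u j ∈ coordZero ℤ (2 * (g + 1)) 2)
    (hu : IsUnimodular u)
    (huiso : ∀ i j, symp (u i) (u j) = 0)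
    (hdual : ∀ i j, symp (s i) (u j) = if i = j then 1 else 0) :
    ∃ uu ∈ Submodule.span ℤ (Set.range u),
      ∀ j, symp (stdA ℤ (g + 1) 0 + (v 0 ⟨1, by omega⟩) • stdB ℤ (g + 1) 0 + uu) (v j) = 0 := by
  classical
  have hA := @symp_stdA_left' ℤ _ g
  have hB := @symp_stdB_left' ℤ _ g
  -- symp with a left argument in `coordZero 2` only sees `pr2` of the right argument
  have hcz : ∀ W ∈ coordZero ℤ (2 * (g + 1)) 2, ∀ y : Fin (2 * (g + 1)) → ℤ,
      symp W y = symp W (pr2 y) := by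
    intro W hW y
    have hW0 : W ⟨0, by omega⟩ = 0 := hW _ (by norm_num)
    have hW1 : W ⟨1, by omega⟩ = 0 := hW _ (by norm_num)
    conv_lhs => rw [pr2_decomp' y]
    rw [symp_add_right', symp_add_right', symp_smul_right', symp_smul_right',
      symp_comm' W (stdA ℤ (g + 1) 0), symp_comm' W (stdB ℤ (g + 1) 0), hA, hB, hW0, hW1]
    ring
  -- decomposition of the form on projections
  have hdec : ∀ x y : Fin (2 * (g + 1)) → ℤ,
      symp (pr2 x) (pr2 y) =
        symp x y - x ⟨0, by omega⟩ * y ⟨1, by omega⟩ + x ⟨1, by omega⟩ * y ⟨0, by omega⟩ := by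
    intro x y
    have hprcz : pr2 x ∈ coordZero ℤ (2 * (g + 1)) 2 := by
      intro j hj; simp [pr2, hj]
    have h1 : symp x y = symp (pr2 x) y
        + x ⟨0, by omega⟩ * y ⟨1, by omega⟩ - x ⟨1, by omega⟩ * y ⟨0, by omega⟩ := by
      conv_lhs => rw [pr2_decomp' x]
      rw [symp_add_left, symp_add_left, symp_smul_left, symp_smul_left, hA, hB]
      ring
    rw [← hcz (pr2 x) hprcz y]
    omega
  -- each `pr2 (v j)` lies in the span of `s`
  have hmem : ∀ j, pr2 (v j) ∈ Submodule.span ℤ (Set.range s) := by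
    intro j
    rw [← hsS]
    refine ⟨fun i hi => by simp [pr2, hi], 1, one_ne_zero, ?_⟩
    rw [one_smul]
    exact Submodule.subset_span ⟨j, rfl⟩
  -- the compensating vector
  set c : Fin r → ℤ := fun l => - symp (pr2 (v 0)) (s l) with hc
  set uu : Fin (2 * (g + 1)) → ℤ := ∑ l, c l • u l with huu
  have huumem : uu ∈ Submodule.span ℤ (Set.range u) :=
    Submodule.sum_mem _ fun l _ => Submodule.smul_mem _ _ (Submodule.subset_span ⟨l, rfl⟩)
  have huucz : uu ∈ coordZero ℤ (2 * (g + 1)) 2 :=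
    Submodule.sum_mem _ fun l _ => Submodule.smul_mem _ _ (huH2 l)
  -- key computation on the span of `s`
  have key : ∀ y ∈ Submodule.span ℤ (Set.range s), symp y uu = - symp (pr2 (v 0)) y := by
    intro y hy
    induction hy using Submodule.span_induction with
    | mem z hz =>
        obtain ⟨i, rfl⟩ := hz
        rw [huu, symp_sum_right']
        rw [Finset.sum_congr rfl fun l _ => by rw [symp_smul_right', hdual i l]]
        simp [hc, Finset.sum_ite_eq, mul_ite]
    | zero => simp [symp_zero_left, symp_zero_right']
    | add x y hx hy ihx ihy => rw [symp_add_left, ihx, ihy, symp_add_right']; ring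
    | smul a x hx ih => rw [symp_smul_left, ih, symp_smul_right']; ring
  -- orthogonality including the diagonal
  have horth' : ∀ j, symp (v 0) (v j) = 0 := by
    intro j
    by_cases h : (0 : Fin (k + 1)) = j
    · rw [← h]; exact symp_self' _
    · exact horth 0 j h
  refine ⟨uu, huumem, fun j => ?_⟩
  have e1 : symp (pr2 (v 0)) (pr2 (v j)) = v 0 ⟨1, by omega⟩ - v j ⟨1, by omega⟩ := by
    rw [hdec, horth' j, ha1 0, ha1 j]; ring
  have e2 : symp uu (v j) = v 0 ⟨1, by omega⟩ - v j ⟨1, by omega⟩ := by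
    rw [hcz uu huucz (v j), symp_comm', key (pr2 (v j)) (hmem j), e1]
    ring
  rw [symp_add_left, symp_add_left, symp_smul_left, hA, hB, ha1 j, e2]
  ring


end Paper
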